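/- For two connected graphs G and H of orders m,n ≥ 2 (H rooted), dem(G) ≤ dem(G ⊙ H) ≤ m·dem(H); moreover dem(G ⊙ H) = dem(G) if and only if H is a tree. -/

import Mathlib

open SimpleGraph

/-- A set `M` of vertices is a distance-edge-monitoring set of `G`. -/
def demSet {V : Type*} (G : SimpleGraph V) (M : Set V) : Prop :=
  ∀ e ∈ G.edgeSet, ∃ x ∈ M, ∃ y : V, G.dist x y ≠ (G.deleteEdges {e}).dist x y

/-- The distance-edge-monitoring number of `G`. -/
noncomputable def dem {V : Type*} (G : SimpleGraph V) [Fintype V] : ℕ :=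
  sInf {k | ∃ M : Finset V, M.card = k ∧ demSet G ↑M}

/-- The cluster (rooted product) `G ⊙ H` with root `r : W`: one copy of `G` and a
copy of `H` for each vertex of `G`, identifying the root of each copy with the
corresponding vertex of `G`. -/
def cluster {V W : Type*} (G : SimpleGraph V) (H : SimpleGraph W) (r : W) :
    SimpleGraph (V × W) where
  Adj x y := (x.1 = y.1 ∧ H.Adj x.2 y.2) ∨ (x.2 = r ∧ y.2 = r ∧ G.Adj x.1 y.1)
  symm := by
    constructor
    rintro ⟨a,w⟩ ⟨b,z⟩ (⟨h1,h2⟩|⟨h1,h2,h3⟩)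
    · exact Or.inl ⟨h1.symm, h2.symm⟩
    · exact Or.inr ⟨h2, h1, h3.symm⟩
  loopless := by
    constructor
    rintro ⟨a,w⟩ (⟨_,h⟩|⟨_,_,h⟩) <;> exact SimpleGraph.irrefl _ h


private lemma lip {V : Type*} (G : SimpleGraph V) {u v : V} (w : V) (h : G.Adj u v) :
    G.dist u w ≤ G.dist v w + 1 := by
  by_cases hr : G.Reachable v w
  · obtain ⟨p, hp⟩ := hr.exists_walk_length_eq_dist
    simpa [hp, Nat.add_comm] using G.dist_le (Walk.cons h p)
  · have : ¬ G.Reachable u w := fun hu => hr ((h.symm.reachable).trans hu)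
    simp [dist_eq_zero_of_not_reachable, this]

private lemma pull {U V : Type*} {G : SimpleGraph V} {K : SimpleGraph U} (f : V → U)
    (hf : ∀ ⦃a b⦄, G.Adj a b → f a = f b ∨ K.Adj (f a) (f b)) :
    ∀ {x y : V} (p : G.Walk x y), K.Reachable (f x) (f y) ∧ K.dist (f x) (f y) ≤ p.length := by
  intro x y p
  induction p with
  | nil => exact ⟨Reachable.refl _, by simp⟩
  | cons h q ih =>
    rcases hf h with he | ha
    · exact ⟨he ▸ ih.1, by rw [he]; exact ih.2.trans (by simp)⟩
    · refine ⟨ha.reachable.trans ih.1, ?_⟩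
      calc K.dist (f _) (f _) ≤ K.dist (f _) (f _) + 1 := lip K _ ha
      _ ≤ _ + 1 := by exact Nat.add_le_add_right ih.2 1
      _ = _ := by simp [Nat.add_comm]

private lemma push {U V : Type*} {G : SimpleGraph U} {K : SimpleGraph V} (f : G →g K) {a b : U}
    (h : G.Reachable a b) : K.Reachable (f a) (f b) ∧ K.dist (f a) (f b) ≤ G.dist a b := by
  obtain ⟨p, hp⟩ := h.exists_walk_length_eq_dist
  exact ⟨⟨p.map f⟩, by simpa [hp] using K.dist_le (p.map f)⟩

private lemma lip' {V : Type*} (G : SimpleGraph V) {u v : V} (w : V) (h : G.Adj u v) :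
    G.dist w u ≤ G.dist w v + 1 := by
  by_cases hr : G.Reachable w v
  · obtain ⟨p, hp⟩ := hr.exists_walk_length_eq_dist
    simpa [hp] using G.dist_le (p.concat h.symm)
  · have : ¬ G.Reachable w u := fun hu => hr (hu.trans h.reachable)
    simp [dist_eq_zero_of_not_reachable, this]
def cluster' {V W : Type*} (G : SimpleGraph V) (K : V → SimpleGraph W) (r : W) :
    SimpleGraph (V × W) where
  Adj x y := (x.1 = y.1 ∧ (K x.1).Adj x.2 y.2) ∨ (x.2 = r ∧ y.2 = r ∧ G.Adj x.1 y.1)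
  symm := by
    constructor
    rintro ⟨a,w⟩ ⟨b,z⟩ (⟨h1,h2⟩|⟨h1,h2,h3⟩)
    · subst h1; exact Or.inl ⟨rfl, h2.symm⟩
    · exact Or.inr ⟨h2, h1, h3.symm⟩
  loopless := by
    constructor
    rintro ⟨a,w⟩ (⟨_,h⟩|⟨_,_,h⟩) <;> exact SimpleGraph.irrefl _ h

section Cluster
attribute [local instance] Classical.propDecidable
variable {V W : Type*} (G : SimpleGraph V) (K : V → SimpleGraph W) (r : W)

private lemma cl_adj {x y : V × W} : (cluster' G K r).Adj x y ↔
    (x.1 = y.1 ∧ (K x.1).Adj x.2 y.2) ∨ (x.2 = r ∧ y.2 = r ∧ G.Adj x.1 y.1) := Iff.rfl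

/-- projection to `G` -/
private lemma pi_walk {x y : V × W} (p : (cluster' G K r).Walk x y) :
    G.Reachable x.1 y.1 ∧ G.dist x.1 y.1 ≤ p.length :=
  pull Prod.fst (by rintro a b (⟨h1,_⟩|⟨_,_,h3⟩); exacts [Or.inl h1, Or.inr h3]) p

/-- retraction to copy `c` -/
private lemma rho_walk (c : V) {x y : V × W} (p : (cluster' G K r).Walk x y) :
    (K c).Reachable (if x.1 = c then x.2 else r) (if y.1 = c then y.2 else r) ∧
    (K c).dist (if x.1 = c then x.2 else r) (if y.1 = c then y.2 else r) ≤ p.length := by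
  refine pull (fun z => if z.1 = c then z.2 else r) ?_ p
  rintro a b (⟨h1,h2⟩|⟨h1,h2,_⟩)
  · by_cases hc : a.1 = c
    · rw [if_pos hc, if_pos (h1 ▸ hc)]; right; rw [← hc]; exact h2
    · rw [if_neg hc, if_neg (h1 ▸ hc)]; exact Or.inl rfl
  · left
    by_cases hc : a.1 = c <;> by_cases hc' : b.1 = c <;> simp [hc, hc', h1, h2]

private def iotaHom (c : V) : K c →g cluster' G K r where
  toFun w := (c, w)
  map_rel' h := Or.inl ⟨rfl, h⟩

private def rootHom : G →g cluster' G K r where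
  toFun v := (v, r)
  map_rel' h := Or.inr ⟨rfl, rfl, h⟩

private lemma reach_same {c : V} {a b : W} :
    (cluster' G K r).Reachable (c, a) (c, b) ↔ (K c).Reachable a b := by
  constructor
  · rintro ⟨p⟩; simpa using (rho_walk G K r c p).1
  · intro h; exact (push (iotaHom G K r c) h).1

private lemma dist_same {c : V} {a b : W} :
    (cluster' G K r).dist (c, a) (c, b) = (K c).dist a b := by
  by_cases h : (K c).Reachable a b
  · refine le_antisymm ?_ ?_
    · exact (push (iotaHom G K r c) h).2
    · obtain ⟨p, hp⟩ := ((reach_same G K r).2 h).exists_walk_length_eq_dist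
      simpa [hp] using (rho_walk G K r c p).2
  · rw [dist_eq_zero_of_not_reachable h,
      dist_eq_zero_of_not_reachable (fun hr => h ((reach_same G K r).1 hr))]

private lemma reach_cross {u v : V} {a b : W} (huv : u ≠ v) :
    (cluster' G K r).Reachable (u, a) (v, b) ↔
      ((K u).Reachable a r ∧ G.Reachable u v ∧ (K v).Reachable r b) := by
  constructor
  · rintro ⟨p⟩
    refine ⟨?_, (pi_walk G K r p).1, ?_⟩
    · have := (rho_walk G K r u p).1
      simpa [huv.symm] using this
    · have := (rho_walk G K r v p).1
      simpa [huv] using this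
  · rintro ⟨h1, h2, h3⟩
    exact ((push (iotaHom G K r u) h1).1.trans ((push (rootHom G K r) h2).1.trans
      (push (iotaHom G K r v) h3).1))
end Cluster
section Cross
attribute [local instance] Classical.propDecidable
variable {V W : Type*} (G : SimpleGraph V) (K : V → SimpleGraph W) (r : W)

/-- potential for the cross-copy lower bound -/
private noncomputable def Fpot (v : V) (b : W) (x : V × W) : ℕ :=
  if x.1 = v then (K v).dist x.2 b
  else (K x.1).dist x.2 r + G.dist x.1 v + (K v).dist r b

private lemma Fpot_step {v : V} {b : W} {x y : V × W}
    (h : (cluster' G K r).Adj x y) : Fpot G K r v b x ≤ Fpot G K r v b y + 1 := by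
  rcases h with ⟨h1, h2⟩ | ⟨h1, h2, h3⟩
  · simp only [Fpot]
    by_cases hc : x.1 = v
    · rw [if_pos hc, if_pos (h1 ▸ hc)]
      subst hc; rw [h1] at h2 ⊢; exact lip _ _ h2
    · rw [if_neg hc, if_neg (h1 ▸ hc), ← h1]
      have : (K x.1).dist x.2 r ≤ (K x.1).dist y.2 r + 1 := lip _ _ h2
      omega
  · simp only [Fpot]
    by_cases hx : x.1 = v <;> by_cases hy : y.1 = v
    · exact absurd (hy ▸ hx ▸ h3) G.irrefl
    · rw [if_pos hx, if_neg hy, h1, h2]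
      have : (K y.1).dist r r = 0 := SimpleGraph.dist_self
      omega
    · rw [if_neg hx, if_pos hy, h1, h2]
      have h4 : G.dist x.1 v ≤ G.dist y.1 v + 1 := lip _ _ h3
      have h5 : G.dist y.1 v = 0 := hy ▸ SimpleGraph.dist_self
      have : (K x.1).dist r r = 0 := SimpleGraph.dist_self
      omega
    · rw [if_neg hx, if_neg hy, h1, h2]
      have h4 : G.dist x.1 v ≤ G.dist y.1 v + 1 := lip _ _ h3
      have : (K x.1).dist r r = 0 := SimpleGraph.dist_self
      have : (K y.1).dist r r = 0 := SimpleGraph.dist_self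
      omega

private lemma Fpot_walk {v : V} {b : W} {x y : V × W} (p : (cluster' G K r).Walk x y) :
    Fpot G K r v b x ≤ Fpot G K r v b y + p.length := by
  induction p with
  | nil => simp
  | cons h q ih =>
    have := Fpot_step G K r (v := v) (b := b) h
    simp only [SimpleGraph.Walk.length_cons]
    omega

private lemma dist_cross {u v : V} {a b : W} (huv : u ≠ v)
    (h1 : (K u).Reachable a r) (h2 : G.Reachable u v) (h3 : (K v).Reachable r b) :
    (cluster' G K r).dist (u, a) (v, b) =
      (K u).dist a r + G.dist u v + (K v).dist r b := by
  refine le_antisymm ?_ ?_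
  · obtain ⟨p1, hp1⟩ := h1.exists_walk_length_eq_dist
    obtain ⟨p2, hp2⟩ := h2.exists_walk_length_eq_dist
    obtain ⟨p3, hp3⟩ := h3.exists_walk_length_eq_dist
    have := (cluster' G K r).dist_le
      (((p1.map (iotaHom G K r u)).append (p2.map (rootHom G K r))).append
        (p3.map (iotaHom G K r v)))
    refine le_trans this (le_of_eq ?_)
    erw [Walk.length_append, Walk.length_append, Walk.length_map, Walk.length_map,
      Walk.length_map, hp1, hp2, hp3]
  · obtain ⟨p, hp⟩ := (((reach_cross G K r huv).2 ⟨h1, h2, h3⟩)).exists_walk_length_eq_dist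
    have := Fpot_walk G K r (v := v) (b := b) p
    rw [hp] at this
    simp only [Fpot] at this
    simp only [if_neg huv, if_pos rfl] at this
    simpa [SimpleGraph.dist_self] using this
end Cross
section Edges
variable {V W : Type*} (G : SimpleGraph V) (K : V → SimpleGraph W) (r : W)

private lemma edge_classify {e : Sym2 (V × W)} (he : e ∈ (cluster' G K r).edgeSet) :
    (∃ c a b, (K c).Adj a b ∧ e = s((c, a), (c, b))) ∨
    (∃ u v, G.Adj u v ∧ e = s((u, r), (v, r))) := by
  induction e using Sym2.ind with
  | _ x y =>
    rw [mem_edgeSet] at he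
    rcases he with ⟨h1, h2⟩ | ⟨h1, h2, h3⟩
    · left
      exact ⟨x.1, x.2, y.2, h2, by rw [Sym2.eq_iff]; left
                                   exact ⟨by rw [Prod.ext_iff]; exact ⟨rfl, rfl⟩,
                                          by rw [Prod.ext_iff]; exact ⟨h1.symm, rfl⟩⟩⟩
    · right
      exact ⟨x.1, y.1, h3, by rw [Sym2.eq_iff]; left
                              exact ⟨by rw [Prod.ext_iff]; exact ⟨rfl, h1⟩,
                                     by rw [Prod.ext_iff]; exact ⟨rfl, h2⟩⟩⟩

private lemma delete_root_edge {u v : V} (huv : u ≠ v) :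
    (cluster' G K r).deleteEdges {s((u, r), (v, r))} =
      cluster' (G.deleteEdges {s(u, v)}) K r := by
  ext ⟨x1, x2⟩ ⟨y1, y2⟩
  rw [deleteEdges_adj]
  constructor
  · rintro ⟨⟨h1, h2⟩ | ⟨h1, h2, h3⟩, hne⟩
    · exact Or.inl ⟨h1, h2⟩
    · refine Or.inr ⟨h1, h2, deleteEdges_adj.2 ⟨h3, ?_⟩⟩
      intro hmem
      rw [Set.mem_singleton_iff, Sym2.eq_iff] at hmem
      apply hne
      rw [Set.mem_singleton_iff, Sym2.eq_iff]
      rcases hmem with ⟨ha, hb⟩ | ⟨ha, hb⟩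
      · exact Or.inl ⟨by rw [Prod.ext_iff]; exact ⟨ha, h1⟩, by rw [Prod.ext_iff]; exact ⟨hb, h2⟩⟩
      · exact Or.inr ⟨by rw [Prod.ext_iff]; exact ⟨ha, h1⟩, by rw [Prod.ext_iff]; exact ⟨hb, h2⟩⟩
  · rintro (⟨h1, h2⟩ | ⟨h1, h2, h3⟩)
    · refine ⟨Or.inl ⟨h1, h2⟩, ?_⟩
      intro hmem
      rw [Set.mem_singleton_iff, Sym2.eq_iff] at hmem
      dsimp at h1
      rcases hmem with ⟨ha, hb⟩ | ⟨ha, hb⟩ <;>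
        · rw [Prod.ext_iff] at ha hb
          exact huv (by grind)
    · rw [deleteEdges_adj, Set.mem_singleton_iff] at h3
      refine ⟨Or.inr ⟨h1, h2, h3.1⟩, ?_⟩
      intro hmem
      rw [Set.mem_singleton_iff, Sym2.eq_iff] at hmem
      apply h3.2
      rw [Sym2.eq_iff]
      rcases hmem with ⟨ha, hb⟩ | ⟨ha, hb⟩ <;> rw [Prod.ext_iff] at ha hb
      · exact Or.inl ⟨ha.1, hb.1⟩
      · exact Or.inr ⟨ha.1, hb.1⟩

private lemma delete_copy_edge [DecidableEq V] {c : V} {a b : W} (hab : a ≠ b) :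
    (cluster' G K r).deleteEdges {s((c, a), (c, b))} =
      cluster' G (Function.update K c ((K c).deleteEdges {s(a, b)})) r := by
  ext ⟨x1, x2⟩ ⟨y1, y2⟩
  rw [deleteEdges_adj]
  constructor
  · rintro ⟨⟨h1, h2⟩ | ⟨h1, h2, h3⟩, hne⟩
    · dsimp at h1 h2 ⊢
      subst h1
      by_cases hc : x1 = c
      · subst hc
        refine Or.inl ⟨rfl, ?_⟩
        rw [Function.update_self, deleteEdges_adj]
        refine ⟨h2, ?_⟩
        intro hmem
        rw [Set.mem_singleton_iff, Sym2.eq_iff] at hmem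
        apply hne
        rw [Set.mem_singleton_iff, Sym2.eq_iff]
        rcases hmem with ⟨ha, hb⟩ | ⟨ha, hb⟩
        · exact Or.inl ⟨by rw [Prod.ext_iff]; exact ⟨rfl, ha⟩,
                        by rw [Prod.ext_iff]; exact ⟨rfl, hb⟩⟩
        · exact Or.inr ⟨by rw [Prod.ext_iff]; exact ⟨rfl, ha⟩,
                        by rw [Prod.ext_iff]; exact ⟨rfl, hb⟩⟩
      · refine Or.inl ⟨rfl, ?_⟩
        rw [Function.update_of_ne hc]
        exact h2
    · exact Or.inr ⟨h1, h2, h3⟩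
  · rintro (⟨h1, h2⟩ | ⟨h1, h2, h3⟩)
    · dsimp at h1 h2 ⊢
      subst h1
      by_cases hc : x1 = c
      · subst hc
        rw [Function.update_self, deleteEdges_adj, Set.mem_singleton_iff] at h2
        refine ⟨Or.inl ⟨rfl, h2.1⟩, ?_⟩
        intro hmem
        rw [Set.mem_singleton_iff, Sym2.eq_iff] at hmem
        apply h2.2
        rw [Sym2.eq_iff]
        rcases hmem with ⟨ha, hb⟩ | ⟨ha, hb⟩ <;> rw [Prod.ext_iff] at ha hb
        · exact Or.inl ⟨ha.2, hb.2⟩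
        · exact Or.inr ⟨ha.2, hb.2⟩
      · rw [Function.update_of_ne hc] at h2
        refine ⟨Or.inl ⟨rfl, h2⟩, ?_⟩
        intro hmem
        rw [Set.mem_singleton_iff, Sym2.eq_iff] at hmem
        rcases hmem with ⟨ha, hb⟩ | ⟨ha, hb⟩ <;> rw [Prod.ext_iff] at ha hb <;>
          exact hc ha.1
    · refine ⟨Or.inr ⟨h1, h2, h3⟩, ?_⟩
      intro hmem
      rw [Set.mem_singleton_iff, Sym2.eq_iff] at hmem
      dsimp at h1 h2
      rcases hmem with ⟨ha, hb⟩ | ⟨ha, hb⟩ <;> rw [Prod.ext_iff] at ha hb <;> simp_all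
end Edges
section Dem
variable {V : Type*} [Fintype V] (G : SimpleGraph V)

private lemma demSet_of_cover {M : Finset V}
    (h : ∀ a b, G.Adj a b → a ∈ M ∨ b ∈ M) : demSet G ↑M := by
  intro e he
  induction e using Sym2.ind with
  | _ a b =>
    rw [mem_edgeSet] at he
    have hd : G.dist a b = 1 := dist_eq_one_iff_adj.2 he
    have hd' : (G.deleteEdges {s(a, b)}).dist a b ≠ 1 := by
      rw [Ne, dist_eq_one_iff_adj, deleteEdges_adj]
      rintro ⟨-, hc⟩
      exact hc rfl
    rcases h a b he with ha | hb
    · exact ⟨a, ha, b, by rw [hd]; exact fun hc => hd' hc.symm⟩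
    · refine ⟨b, hb, a, ?_⟩
      rw [dist_comm, (G.deleteEdges {s(a, b)}).dist_comm, hd]
      exact fun hc => hd' hc.symm

private lemma demSet_univ : demSet G ↑(Finset.univ : Finset V) :=
  demSet_of_cover G (fun a _ _ => Or.inl (Finset.mem_univ a))

private lemma dem_nonempty : {k | ∃ M : Finset V, M.card = k ∧ demSet G ↑M}.Nonempty :=
  ⟨_, Finset.univ, rfl, demSet_univ G⟩

private lemma dem_spec : ∃ M : Finset V, M.card = dem G ∧ demSet G ↑M :=
  Nat.sInf_mem (dem_nonempty G)

private lemma dem_le {M : Finset V} (h : demSet G ↑M) : dem G ≤ M.card :=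
  Nat.sInf_le ⟨M, rfl, h⟩

private lemma dem_le_card_sub_one [DecidableEq V] (u : V) : dem G ≤ Fintype.card V - 1 := by
  have h : demSet G ↑(Finset.univ.erase u) := by
    apply demSet_of_cover
    intro a b hab
    by_cases ha : a = u
    · exact Or.inr (Finset.mem_erase.2 ⟨fun hb => G.irrefl (ha ▸ hb ▸ hab), Finset.mem_univ _⟩)
    · exact Or.inl (Finset.mem_erase.2 ⟨ha, Finset.mem_univ _⟩)
  simpa [Finset.card_erase_of_mem] using dem_le G h

private lemma exists_adj (hG : G.Connected) (hm : 2 ≤ Fintype.card V) :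
    ∃ a b, G.Adj a b := by
  obtain ⟨a, b, hab⟩ := Fintype.exists_pair_of_one_lt_card (α := V) (by omega)
  obtain ⟨w, hw, q, -⟩ := SimpleGraph.Walk.exists_eq_cons_of_ne hab (hG a b).some
  exact ⟨a, w, hw⟩

private lemma demSet_mem_nonempty {M : Finset V} (h : demSet G ↑M)
    {a b : V} (hab : G.Adj a b) : M.Nonempty := by
  obtain ⟨x, hx, -⟩ := h s(a, b) hab
  exact ⟨x, hx⟩
end Dem
section GoodEdge
variable {W : Type*} [DecidableEq W] (H : SimpleGraph W) (r : W)

private lemma exists_parent {z : W} (hz : z ≠ r) (hr : H.Reachable r z) :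
    ∃ p, H.Adj p z ∧ H.dist r p + 1 = H.dist r z := by
  obtain ⟨w, hw⟩ := hr.exists_walk_length_eq_dist
  obtain ⟨p, hadj, q, heq⟩ := SimpleGraph.Walk.exists_eq_cons_of_ne hz w.reverse
  have hlen : q.length + 1 = H.dist r z := by
    have h1 : w.reverse.length = H.dist r z := by rw [Walk.length_reverse, hw]
    rw [heq] at h1; simpa using h1
  have h2 : H.dist r p ≤ q.length := by
    have := H.dist_le q.reverse
    rwa [Walk.length_reverse] at this
  have h3 : H.dist r z ≤ H.dist r p + 1 := lip' H r hadj
  have h4 : 1 ≤ H.dist r z := by omega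
  exact ⟨p, hadj.symm, by omega⟩

private lemma good_of_parents (e : Sym2 W)
    (hP : ∀ z, z ≠ r → H.Reachable r z →
      ∃ p, H.Adj p z ∧ H.dist r p + 1 = H.dist r z ∧ s(p, z) ≠ e) :
    ∀ z, H.Reachable r z →
      (H.deleteEdges {e}).Reachable r z ∧ (H.deleteEdges {e}).dist r z = H.dist r z := by
  intro z hz
  generalize hn : H.dist r z = n
  induction n using Nat.strong_induction_on generalizing z with
  | _ n ih =>
    by_cases hzr : z = r
    · subst hzr; exact ⟨Reachable.refl _, by rw [SimpleGraph.dist_self, ← hn, SimpleGraph.dist_self]⟩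
    · obtain ⟨p, hadj, hd, hne⟩ := hP z hzr hz
      have hrp : H.Reachable r p := hz.trans hadj.symm.reachable
      have hdp : H.dist r p < n := by omega
      obtain ⟨hreach, heq⟩ := ih _ hdp p hrp rfl
      have hadj' : (H.deleteEdges {e}).Adj p z :=
        deleteEdges_adj.2 ⟨hadj, by simpa using hne⟩
      have hRe : (H.deleteEdges {e}).Reachable r z := hreach.trans hadj'.reachable
      refine ⟨hRe, le_antisymm ?_ ?_⟩
      · have := lip' (H.deleteEdges {e}) r hadj'.symm
        omega
      · have := Reachable.dist_anti (deleteEdges_le _) hRe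
        omega

private lemma two_incident {t : W} (c : H.Walk t t) (hlen : 2 ≤ c.length)
    (hnodup : c.edges.Nodup) {y : W} (hy : y ∈ c.support) :
    ∃ w w', w ≠ w' ∧ s(y, w) ∈ c.edges ∧ s(y, w') ∈ c.edges := by
  set c' := c.rotate y hy with hc'
  have hrot : c'.edges ~r c.edges := c.rotate_edges y hy
  have hmemiff : ∀ e, e ∈ c'.edges ↔ e ∈ c.edges := fun e => hrot.perm.mem_iff
  have hnodup' : c'.edges.Nodup := hrot.nodup_iff.2 hnodup
  have hlen' : c'.length = c.length := by
    rw [← Walk.length_edges, ← Walk.length_edges, hrot.perm.length_eq]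
  have hnil : ¬c'.Nil := by rw [Walk.nil_iff_length_eq]; omega
  obtain ⟨u, hu, q, hq⟩ := Walk.not_nil_iff.1 hnil
  have hqlen : q.length + 1 = c'.length := by rw [hq]; simp
  have hqnil : ¬q.reverse.Nil := by
    rw [Walk.nil_iff_length_eq, Walk.length_reverse]; omega
  obtain ⟨w, hw, q2, hq2⟩ := Walk.not_nil_iff.1 hqnil
  have hwq : s(y, w) ∈ q.edges := by
    have : s(y, w) ∈ q.reverse.edges := by rw [hq2]; simp
    rwa [Walk.edges_reverse, List.mem_reverse] at this
  have hedges : c'.edges = s(y, u) :: q.edges := by rw [hq]; simp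
  refine ⟨u, w, ?_, (hmemiff _).1 (by rw [hedges]; simp),
    (hmemiff _).1 (by rw [hedges]; exact List.mem_cons_of_mem _ hwq)⟩
  rintro rfl
  rw [hedges, List.nodup_cons] at hnodup'
  exact hnodup'.1 hwq

private lemma good_edge_of_max (hconn : H.Connected) {t : W} (c : H.Walk t t)
    (hlen : 2 ≤ c.length) (hnodup : c.edges.Nodup) {x y : W}
    (hmem : s(x, y) ∈ c.edges)
    (hmax : ∀ u v, s(u, v) ∈ c.edges → H.dist r u + H.dist r v ≤ H.dist r x + H.dist r y)
    (hle : H.dist r x ≤ H.dist r y) :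
    ∃ e ∈ H.edgeSet, ∀ z,
      (H.deleteEdges {e}).Reachable r z ∧ (H.deleteEdges {e}).dist r z = H.dist r z := by
  have hAdj : H.Adj x y := c.edges_subset_edgeSet hmem
  have hxy : x ≠ y := hAdj.ne
  have hup : H.dist r y ≤ H.dist r x + 1 := lip' H r hAdj.symm
  refine ⟨s(x, y), hAdj, fun z => ?_⟩
  rcases Nat.lt_or_ge (H.dist r x) (H.dist r y) with hlt | hge
  · -- d r y = d r x + 1 : y needs an alternative parent
    have hdy : H.dist r x + 1 = H.dist r y := by omega
    have hyr : y ≠ r := by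
      intro h; rw [h, SimpleGraph.dist_self] at hdy; omega
    have hysup : y ∈ c.support := c.snd_mem_support_of_mem_edges hmem
    obtain ⟨w1, w2, hww, hw1, hw2⟩ := two_incident H c hlen hnodup hysup
    have key : ∃ w0, w0 ≠ x ∧ s(y, w0) ∈ c.edges := by
      by_cases h1 : w1 = x
      · exact ⟨w2, fun h => hww (h1.trans h.symm), hw2⟩
      · exact ⟨w1, h1, hw1⟩
    obtain ⟨w0, hw0x, hw0⟩ := key
    have hAdj0 : H.Adj y w0 := c.edges_subset_edgeSet hw0
    have hbound : H.dist r y + H.dist r w0 ≤ H.dist r x + H.dist r y := hmax y w0 hw0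
    have hlow : H.dist r y ≤ H.dist r w0 + 1 := lip' H r hAdj0
    have hpar : H.dist r w0 + 1 = H.dist r y := by omega
    apply good_of_parents H r _ _ z (hconn r z)
    intro z' hz' hrz'
    by_cases hzy : z' = y
    · subst hzy
      refine ⟨w0, hAdj0.symm, hpar, ?_⟩
      intro hcon
      rw [Sym2.eq_iff] at hcon
      rcases hcon with ⟨h, -⟩ | ⟨h, -⟩
      · exact hw0x h
      · exact hAdj0.ne h.symm
    · obtain ⟨p, hp, hd⟩ := exists_parent H r hz' hrz'
      refine ⟨p, hp, hd, ?_⟩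
      intro hcon
      rw [Sym2.eq_iff] at hcon
      rcases hcon with ⟨-, h⟩ | ⟨rfl, rfl⟩
      · exact hzy h
      · omega
  · -- d r x = d r y : the edge is level, never a parent edge
    have heq : H.dist r x = H.dist r y := by omega
    apply good_of_parents H r _ _ z (hconn r z)
    intro z' hz' hrz'
    obtain ⟨p, hp, hd⟩ := exists_parent H r hz' hrz'
    refine ⟨p, hp, hd, ?_⟩
    intro hcon
    rw [Sym2.eq_iff] at hcon
    rcases hcon with ⟨rfl, rfl⟩ | ⟨rfl, rfl⟩ <;> omega

private lemma exists_good_edge (hconn : H.Connected) (hnt : ¬H.IsAcyclic) :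
    ∃ e ∈ H.edgeSet, ∀ z,
      (H.deleteEdges {e}).Reachable r z ∧ (H.deleteEdges {e}).dist r z = H.dist r z := by
  rw [isAcyclic_iff_forall_edge_isBridge] at hnt
  push_neg at hnt
  obtain ⟨e₀, he₀, hnb⟩ := hnt
  induction e₀ using Sym2.ind with
  | _ a b =>
    rw [mem_edgeSet] at he₀
    rw [isBridge_iff] at hnb
    push_neg at hnb
    have hreach : (H.deleteEdges {s(a, b)}).Reachable a b := hnb
    obtain ⟨p0⟩ := hreach.symm
    set pth := p0.toPath with hpth
    have hsub : ∀ e ∈ (pth : (H.deleteEdges {s(a,b)}).Walk b a).edges, e ∈ H.edgeSet :=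
      fun e he => by
        have := Walk.edges_subset_edgeSet _ he
        rw [edgeSet_deleteEdges] at this
        exact this.1
    set q' : H.Walk b a := Walk.transfer _ H hsub with hq'
    have hq'edges : q'.edges = (pth : (H.deleteEdges {s(a,b)}).Walk b a).edges :=
      Walk.edges_transfer _ hsub
    have hq'nodup : q'.edges.Nodup := by
      rw [hq'edges]; exact pth.2.isTrail.edges_nodup
    have hnotmem : s(a, b) ∉ q'.edges := by
      rw [hq'edges]
      intro hc
      have := Walk.edges_subset_edgeSet _ hc
      rw [edgeSet_deleteEdges] at this
      exact this.2 rfl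
    set c : H.Walk a a := Walk.cons he₀ q' with hc
    have hcedges : c.edges = s(a, b) :: q'.edges := by rw [hc]; simp
    have hcnodup : c.edges.Nodup := by
      rw [hcedges, List.nodup_cons]; exact ⟨hnotmem, hq'nodup⟩
    have hclen : 2 ≤ c.length := by
      have h1 : c.length = q'.length + 1 := by rw [hc]; simp
      rcases Nat.eq_zero_or_pos q'.length with h0 | h0
      · exfalso
        have : b = a := by
          have : q'.Nil := Walk.nil_iff_length_eq.2 h0
          exact Walk.Nil.eq this
        exact he₀.ne this.symm
      · omega
    have hne : c.edges.toFinset.Nonempty := ⟨s(a, b), by rw [hcedges]; simp⟩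
    obtain ⟨estar, hestar, hemax⟩ := Finset.exists_max_image c.edges.toFinset
      (fun e => Sym2.lift ⟨fun u v => H.dist r u + H.dist r v, fun a b => Nat.add_comm _ _⟩ e) hne
    obtain ⟨⟨x, y⟩, hxy⟩ := Quot.exists_rep estar
    rw [List.mem_toFinset] at hestar
    have hmax' : ∀ u v, s(u, v) ∈ c.edges → H.dist r u + H.dist r v ≤ H.dist r x + H.dist r y := by
      intro u v huv
      have := hemax s(u, v) (List.mem_toFinset.2 huv)
      rw [← hxy] at this
      simpa using this
    rw [← hxy] at hestar
    rcases le_total (H.dist r x) (H.dist r y) with h | h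
    · exact good_edge_of_max H r hconn c hclen hcnodup hestar hmax' h
    · have hestar' : s(y, x) ∈ c.edges := by rwa [Sym2.eq_swap]
      have hmax'' : ∀ u v, s(u, v) ∈ c.edges →
          H.dist r u + H.dist r v ≤ H.dist r y + H.dist r x := by
        intro u v huv; have := hmax' u v huv; omega
      exact good_edge_of_max H r hconn c hclen hcnodup hestar' hmax'' h
end GoodEdge
section Main
variable {V W : Type*} [Fintype V] [Fintype W]

private lemma part1 (G : SimpleGraph V) (H : SimpleGraph W) (r : W)
    (hG : G.Connected) (hH : H.Connected) :
    dem G ≤ dem (cluster' G (fun _ => H) r) := by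
  classical
  obtain ⟨M, hMcard, hM⟩ := dem_spec (cluster' G (fun _ => H) r)
  have hM₁ : demSet G ↑(M.image Prod.fst) := by
    intro e he
    induction e using Sym2.ind with
    | _ a b =>
      rw [mem_edgeSet] at he
      have hab : a ≠ b := he.ne
      have heC : s(((a : V), r), ((b : V), r)) ∈ (cluster' G (fun _ => H) r).edgeSet := by
        rw [mem_edgeSet]; exact Or.inr ⟨rfl, rfl, he⟩
      obtain ⟨x, hx, y, hne⟩ := hM _ heC
      obtain ⟨u, w⟩ := x; obtain ⟨v, z⟩ := y
      rw [delete_root_edge G (fun _ => H) r hab] at hne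
      by_cases huv : u = v
      · subst huv
        rw [dist_same G (fun _ => H) r, dist_same (G.deleteEdges {s(a,b)}) (fun _ => H) r] at hne
        exact absurd rfl hne
      · refine ⟨u, Finset.mem_image.2 ⟨(u, w), hx, rfl⟩, v, ?_⟩
        by_cases hr' : (G.deleteEdges {s(a, b)}).Reachable u v
        · rw [dist_cross G (fun _ => H) r huv (hH.preconnected w r) (hG.preconnected u v)
              (hH.preconnected r z),
            dist_cross (G.deleteEdges {s(a,b)}) (fun _ => H) r huv (hH.preconnected w r) hr'
              (hH.preconnected r z)] at hne
          intro hcon; exact hne (by omega)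
        · have h1 : 0 < G.dist u v := hG.pos_dist_of_ne huv
          rw [dist_eq_zero_of_not_reachable hr']
          omega
  calc dem G ≤ (M.image Prod.fst).card := dem_le G hM₁
    _ ≤ M.card := Finset.card_image_le
    _ = _ := hMcard

private lemma part2 (G : SimpleGraph V) (H : SimpleGraph W) (r : W)
    (hG : G.Connected) (hH : H.Connected) (hn : 2 ≤ Fintype.card W) :
    dem (cluster' G (fun _ => H) r) ≤ Fintype.card V * dem H := by
  classical
  obtain ⟨MH, hMHcard, hMH⟩ := dem_spec H
  obtain ⟨a0, b0, hab0⟩ := exists_adj H hH hn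
  obtain ⟨x1, hx1⟩ : MH.Nonempty := demSet_mem_nonempty H hMH hab0
  have hMdem : demSet (cluster' G (fun _ => H) r) ↑((Finset.univ : Finset V) ×ˢ MH) := by
    intro E hE
    rcases edge_classify G (fun _ => H) r hE with ⟨c, a, b, hab, rfl⟩ | ⟨u, v, huv, rfl⟩
    · obtain ⟨x0, hx0, y0, hne0⟩ := hMH s(a, b) hab
      refine ⟨(c, x0), Finset.mem_product.2 ⟨Finset.mem_univ _, hx0⟩, (c, y0), ?_⟩
      rw [delete_copy_edge G (fun _ => H) r hab.ne,
        dist_same G (fun _ => H) r, dist_same G _ r]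
      simpa [Function.update_self] using hne0
    · have huvne : u ≠ v := huv.ne
      refine ⟨(u, x1), Finset.mem_product.2 ⟨Finset.mem_univ _, hx1⟩, (v, r), ?_⟩
      rw [delete_root_edge G (fun _ => H) r huvne,
        dist_cross G (fun _ => H) r huvne (hH.preconnected x1 r) (hG.preconnected u v)
          (Reachable.refl r)]
      have hd1 : G.dist u v = 1 := dist_eq_one_iff_adj.2 huv
      by_cases hr' : (G.deleteEdges {s(u, v)}).Reachable u v
      · rw [dist_cross (G.deleteEdges {s(u,v)}) (fun _ => H) r huvne (hH.preconnected x1 r) hr'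
          (Reachable.refl r)]
        have hd2 : (G.deleteEdges {s(u, v)}).dist u v ≠ 1 := by
          rw [Ne, dist_eq_one_iff_adj, deleteEdges_adj]
          rintro ⟨-, hc⟩; exact hc rfl
        omega
      · have hnr : ¬ (cluster' (G.deleteEdges {s(u,v)}) (fun _ => H) r).Reachable
            (u, x1) (v, r) := by
          rw [reach_cross (G.deleteEdges {s(u,v)}) (fun _ => H) r huvne]
          rintro ⟨-, h2, -⟩; exact hr' h2
        rw [dist_eq_zero_of_not_reachable hnr]
        omega
  calc dem (cluster' G (fun _ => H) r) ≤ (Finset.univ ×ˢ MH).card := dem_le _ hMdem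
    _ = Fintype.card V * dem H := by
      rw [Finset.card_product, Finset.card_univ, hMHcard]

private lemma part3a (G : SimpleGraph V) (H : SimpleGraph W) (r : W)
    (hG : G.Connected) (hH : H.Connected) (hm : 2 ≤ Fintype.card V)
    (htree : H.IsTree) : dem (cluster' G (fun _ => H) r) ≤ dem G := by
  classical
  obtain ⟨MG, hMGcard, hMG⟩ := dem_spec G
  obtain ⟨ua, ub, huab⟩ := exists_adj G hG hm
  obtain ⟨u0, hu0⟩ : MG.Nonempty := demSet_mem_nonempty G hMG huab
  have hacyc : H.IsAcyclic := ((isTree_iff H).1 htree).2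
  have hMdem : demSet (cluster' G (fun _ => H) r) ↑(MG.image (fun v => (v, r))) := by
    intro E hE
    rcases edge_classify G (fun _ => H) r hE with ⟨c, a, b, hab, rfl⟩ | ⟨u, v, huv, rfl⟩
    · -- copy edge: a bridge of H
      have hbr : ¬ (H.deleteEdges {s(a, b)}).Reachable a b := by
        have := (isAcyclic_iff_forall_edge_isBridge.1 hacyc) ((mem_edgeSet H).2 hab)
        exact isBridge_iff.1 this
      obtain ⟨z, hz⟩ : ∃ z, ¬ (H.deleteEdges {s(a, b)}).Reachable r z := by
        by_cases hra : (H.deleteEdges {s(a, b)}).Reachable r a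
        · exact ⟨b, fun h => hbr (hra.symm.trans h)⟩
        · exact ⟨a, hra⟩
      have hzr : z ≠ r := by intro h; apply hz; rw [h]
      refine ⟨(u0, r), Finset.mem_image.2 ⟨u0, hu0, rfl⟩, (c, z), ?_⟩
      rw [delete_copy_edge G (fun _ => H) r hab.ne]
      by_cases huc : u0 = c
      · subst huc
        rw [dist_same G (fun _ => H) r, dist_same G _ r, Function.update_self,
          dist_eq_zero_of_not_reachable hz]
        have := hH.pos_dist_of_ne (Ne.symm hzr)
        omega
      · rw [dist_cross G (fun _ => H) r huc (Reachable.refl r) (hG.preconnected u0 c)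
          (hH.preconnected r z)]
        have hnr : ¬ (cluster' G (Function.update (fun _ => H) c
            (H.deleteEdges {s(a, b)})) r).Reachable (u0, r) (c, z) := by
          rw [reach_cross G _ r huc]
          rintro ⟨-, -, h3⟩
          rw [Function.update_self] at h3
          exact hz h3
        rw [dist_eq_zero_of_not_reachable hnr]
        have := hH.pos_dist_of_ne (Ne.symm hzr)
        omega
    · -- root edge
      obtain ⟨x0, hx0, y0, hne0⟩ := hMG s(u, v) huv
      have hx0y0 : x0 ≠ y0 := by
        rintro rfl; exact hne0 (by rw [SimpleGraph.dist_self, SimpleGraph.dist_self])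
      refine ⟨(x0, r), Finset.mem_image.2 ⟨x0, hx0, rfl⟩, (y0, r), ?_⟩
      rw [delete_root_edge G (fun _ => H) r huv.ne,
        dist_cross G (fun _ => H) r hx0y0 (Reachable.refl r) (hG.preconnected x0 y0)
          (Reachable.refl r)]
      by_cases hr' : (G.deleteEdges {s(u, v)}).Reachable x0 y0
      · rw [dist_cross (G.deleteEdges {s(u,v)}) (fun _ => H) r hx0y0 (Reachable.refl r) hr'
          (Reachable.refl r)]
        simp only [SimpleGraph.dist_self]
        omega
      · have hnr : ¬ (cluster' (G.deleteEdges {s(u,v)}) (fun _ => H) r).Reachable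
            (x0, r) (y0, r) := by
          rw [reach_cross (G.deleteEdges {s(u,v)}) (fun _ => H) r hx0y0]
          rintro ⟨-, h2, -⟩; exact hr' h2
        rw [dist_eq_zero_of_not_reachable hnr]
        have := hG.pos_dist_of_ne hx0y0
        omega
  calc dem (cluster' G (fun _ => H) r) ≤ (MG.image (fun v => (v, r))).card := dem_le _ hMdem
    _ = MG.card := Finset.card_image_of_injective _ (fun a b h => (Prod.ext_iff.1 h).1)
    _ = dem G := hMGcard

private lemma part3b (G : SimpleGraph V) (H : SimpleGraph W) (r : W)
    (hG : G.Connected) (hH : H.Connected) (hm : 2 ≤ Fintype.card V)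
    (heq : dem (cluster' G (fun _ => H) r) = dem G) : H.IsTree := by
  classical
  rw [isTree_iff]
  refine ⟨hH, ?_⟩
  by_contra hnacyc
  obtain ⟨e, heH, hgood⟩ := exists_good_edge H r hH hnacyc
  obtain ⟨⟨ea, eb⟩, rfl⟩ := Quot.exists_rep e
  have hadj : H.Adj ea eb := (mem_edgeSet H).1 heH
  obtain ⟨M, hMcard, hM⟩ := dem_spec (cluster' G (fun _ => H) r)
  have hNe : Nonempty V := Fintype.card_pos_iff.1 (by omega)
  have hMsmall : M.card ≤ Fintype.card V - 1 := by
    rw [hMcard, heq]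
    exact dem_le_card_sub_one G (Classical.arbitrary V)
  obtain ⟨v₀, hv₀⟩ : ∃ v₀ : V, v₀ ∉ M.image Prod.fst := by
    by_contra hc
    push_neg at hc
    have : (Finset.univ : Finset V) ⊆ M.image Prod.fst := fun x _ => hc x
    have h1 := Finset.card_le_card this
    have h2 : (M.image Prod.fst).card ≤ M.card := Finset.card_image_le
    rw [Finset.card_univ] at h1
    omega
  have hE : s(((v₀ : V), ea), (v₀, eb)) ∈ (cluster' G (fun _ => H) r).edgeSet := by
    rw [mem_edgeSet]; exact Or.inl ⟨rfl, hadj⟩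
  obtain ⟨⟨u, w⟩, hu, ⟨v, z⟩, hne⟩ := hM _ hE
  have huv₀ : u ≠ v₀ := by
    rintro rfl
    exact hv₀ (Finset.mem_image.2 ⟨(u, w), hu, rfl⟩)
  rw [delete_copy_edge G (fun _ => H) r hadj.ne] at hne
  set K' := Function.update (fun _ : V => H) v₀ (H.deleteEdges {s(ea, eb)}) with hK'
  have hK'u : K' u = H := by rw [hK']; exact Function.update_of_ne huv₀ _ _
  apply hne
  by_cases hvu : u = v
  · subst hvu
    rw [dist_same G (fun _ => H) r, dist_same G K' r, hK'u]
  · have hK'v_reach : (K' v).Reachable r z := by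
      rcases eq_or_ne v v₀ with hv | hv
      · rw [hK', hv, Function.update_self]; exact (hgood z).1
      · rw [hK', Function.update_of_ne hv]; exact hH.preconnected r z
    have hK'v_dist : (K' v).dist r z = H.dist r z := by
      rcases eq_or_ne v v₀ with hv | hv
      · rw [hK', hv, Function.update_self]; exact (hgood z).2
      · rw [hK', Function.update_of_ne hv]
    rw [dist_cross G (fun _ => H) r hvu (hH.preconnected w r) (hG.preconnected u v)
        (hH.preconnected r z),
      dist_cross G K' r hvu (by rw [hK'u]; exact hH.preconnected w r)
        (hG.preconnected u v) hK'v_reach, hK'u, hK'v_dist]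
end Main
theorem stmt_7 {V W : Type*} [Fintype V] [Fintype W]
    (G : SimpleGraph V) (H : SimpleGraph W) (r : W)
    (hG : G.Connected) (hH : H.Connected)
    (hm : 2 ≤ Fintype.card V) (hn : 2 ≤ Fintype.card W) :
    dem G ≤ dem (cluster G H r) ∧
    dem (cluster G H r) ≤ Fintype.card V * dem H ∧
    (dem (cluster G H r) = dem G ↔ H.IsTree) := by
  have hceq : cluster G H r = cluster' G (fun _ => H) r := rfl
  rw [hceq]
  exact ⟨part1 G H r hG hH, part2 G H r hG hH hn,
    ⟨fun h => part3b G H r hG hH hm h,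
     fun ht => le_antisymm (part3a G H r hG hH hm ht) (part1 G H r hG hH)⟩⟩
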